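/- Let p̄_r : [0,L] → ℝ³ be a C² arc-length parameterized curve with curvature bounded by K (i.e., ‖p̄_r''(s)‖ ≤ K for all s). Then for every point p with dist(p, image of p̄_r) < 1/(2K), and any two local minimizers s₁, s₂ ∈ (0,L) of s ↦ ‖p − p̄_r(s)‖² with ‖p − p̄_r(sᵢ)‖ < 1/(2K), satisfying |s₁ − s₂| < 1/K, we have s₁ = s₂. -/

import Mathlib

open RealInnerProductSpace

private lemma proj_aux
    (L K : ℝ) (hK : 0 < K)
    (pr : ℝ → EuclideanSpace ℝ (Fin 3))
    (hpr : ContDiff ℝ 2 pr)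
    (hunit : ∀ s ∈ Set.Icc (0:ℝ) L, ‖deriv pr s‖ = 1)
    (hcurv : ∀ s ∈ Set.Icc (0:ℝ) L, ‖deriv (deriv pr) s‖ ≤ K)
    (p : EuclideanSpace ℝ (Fin 3))
    (s₁ s₂ : ℝ)
    (hs₁ : s₁ ∈ Set.Ioo (0:ℝ) L) (hs₂ : s₂ ∈ Set.Ioo (0:ℝ) L)
    (hmin₁ : IsLocalMin (fun s => ‖p - pr s‖ ^ 2) s₁)
    (hmin₂ : IsLocalMin (fun s => ‖p - pr s‖ ^ 2) s₂)
    (hd₁ : ‖p - pr s₁‖ < 1 / (2 * K))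
    (hd₂ : ‖p - pr s₂‖ < 1 / (2 * K))
    (hlt : s₁ < s₂) (hclose : s₂ - s₁ < 1 / K) : False := by
  have hprd : Differentiable ℝ pr := hpr.differentiable (by norm_num)
  have hpr1 : ContDiff ℝ 1 (deriv pr) := by
    have := (contDiff_succ_iff_deriv (n := 1)).mp (by exact_mod_cast hpr)
    exact this.2.2
  have hprd2 : Differentiable ℝ (deriv pr) := hpr1.differentiable (by norm_num)
  set g : ℝ → ℝ := fun s => ⟪p - pr s, deriv pr s⟫ with hg
  -- derivative of pmpr
  have h1 : ∀ s, HasDerivAt (fun s => p - pr s) (-(deriv pr s)) s := fun s =>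
    (hprd s).hasDerivAt.const_sub p
  have hgderiv : ∀ s, HasDerivAt g
      (⟪p - pr s, deriv (deriv pr) s⟫ + ⟪-(deriv pr s), deriv pr s⟫) s := fun s =>
    HasDerivAt.inner ℝ (h1 s) (hprd2 s).hasDerivAt
  -- the squared-distance function equals the inner product
  have hfeq : (fun s => ‖p - pr s‖ ^ 2) = fun s => ⟪p - pr s, p - pr s⟫ :=
    funext fun s => (real_inner_self_eq_norm_sq _).symm
  have hfderiv : ∀ s, HasDerivAt (fun s => ‖p - pr s‖ ^ 2) (-2 * g s) s := by
    intro s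
    rw [hfeq]
    have : HasDerivAt (fun s => ⟪p - pr s, p - pr s⟫)
        (⟪p - pr s, -deriv pr s⟫ + ⟪-deriv pr s, p - pr s⟫) s := HasDerivAt.inner ℝ (h1 s) (h1 s)
    convert this using 1
    simp [hg, inner_neg_right, inner_neg_left, real_inner_comm (p - pr s)]
    ring
  have hgz₁ : g s₁ = 0 := by
    have h0 : deriv (fun s => ‖p - pr s‖ ^ 2) s₁ = 0 := hmin₁.deriv_eq_zero
    have := (hfderiv s₁).deriv
    rw [h0] at this
    linarith
  have hgz₂ : g s₂ = 0 := by
    have h0 : deriv (fun s => ‖p - pr s‖ ^ 2) s₂ = 0 := hmin₂.deriv_eq_zero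
    have := (hfderiv s₂).deriv
    rw [h0] at this
    linarith
  -- Lipschitz bound on [0, L]
  have hlip : ∀ a ∈ Set.Icc (0:ℝ) L, ∀ b ∈ Set.Icc (0:ℝ) L, ‖pr b - pr a‖ ≤ |b - a| := by
    intro a ha b hb
    have := Convex.norm_image_sub_le_of_norm_hasDerivWithin_le
      (f := pr) (f' := deriv pr) (s := Set.Icc 0 L) (C := 1)
      (fun x _ => (hprd x).hasDerivAt.hasDerivWithinAt)
      (fun x hx => le_of_eq (hunit x hx)) (convex_Icc _ _) ha hb
    simpa [Real.norm_eq_abs] using this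
  have hsub : Set.Icc s₁ s₂ ⊆ Set.Icc (0:ℝ) L := Set.Icc_subset_Icc hs₁.1.le hs₂.2.le
  -- distance bound on [s₁, s₂]
  have hbound : ∀ s ∈ Set.Icc s₁ s₂, ‖p - pr s‖ < 1 / K := by
    intro s hs
    have hsI := hsub hs
    have h2K : (0:ℝ) < 2 * K := by positivity
    rcases le_or_gt s ((s₁ + s₂) / 2) with hmid | hmid
    · have hle : ‖p - pr s‖ ≤ ‖p - pr s₁‖ + ‖pr s₁ - pr s‖ := by
        have : p - pr s = (p - pr s₁) + (pr s₁ - pr s) := by abel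
        rw [this]; exact norm_add_le _ _
      have h3 : ‖pr s₁ - pr s‖ ≤ |s₁ - s| := hlip s hsI s₁ (hsub ⟨le_refl s₁, hlt.le⟩)
      have h4 : |s₁ - s| = s - s₁ := by rw [abs_sub_comm]; exact abs_of_nonneg (by linarith [hs.1])
      have h5 : s - s₁ < 1 / (2 * K) := by
        have : s - s₁ ≤ (s₂ - s₁) / 2 := by linarith
        have h6 : (s₂ - s₁) / 2 < 1 / (2 * K) := by
          rw [div_lt_div_iff₀ (by norm_num) h2K]
          rw [lt_div_iff₀ hK] at hclose
          linarith
        linarith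
      have : 1 / (2*K) + 1 / (2*K) = 1 / K := by
        field_simp
        norm_num
      linarith [hle, h3]
    · have hle : ‖p - pr s‖ ≤ ‖p - pr s₂‖ + ‖pr s₂ - pr s‖ := by
        have : p - pr s = (p - pr s₂) + (pr s₂ - pr s) := by abel
        rw [this]; exact norm_add_le _ _
      have h3 : ‖pr s₂ - pr s‖ ≤ |s₂ - s| := hlip s hsI s₂ (hsub ⟨hlt.le, le_refl s₂⟩)
      have h4 : |s₂ - s| = s₂ - s := abs_of_nonneg (by linarith [hs.2])
      have h5 : s₂ - s < 1 / (2 * K) := by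
        have : s₂ - s ≤ (s₂ - s₁) / 2 := by linarith
        have h6 : (s₂ - s₁) / 2 < 1 / (2 * K) := by
          rw [div_lt_div_iff₀ (by norm_num) h2K]
          rw [lt_div_iff₀ hK] at hclose
          linarith
        linarith
      have : 1 / (2*K) + 1 / (2*K) = 1 / K := by
        field_simp
        norm_num
      linarith [hle, h3]
  -- g strictly decreasing
  have hgcont : Continuous g := by
    apply Continuous.inner
    · exact continuous_const.sub hprd.continuous
    · exact hpr1.continuous
  have hanti : StrictAntiOn g (Set.Icc s₁ s₂) := by
    apply strictAntiOn_of_deriv_neg (convex_Icc _ _) hgcont.continuousOn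
    intro x hx
    rw [interior_Icc] at hx
    have hxI : x ∈ Set.Icc s₁ s₂ := Set.Ioo_subset_Icc_self hx
    have hxL : x ∈ Set.Icc (0:ℝ) L := hsub hxI
    rw [(hgderiv x).deriv]
    have hb1 : ⟪p - pr x, deriv (deriv pr) x⟫ < 1 := by
      calc ⟪p - pr x, deriv (deriv pr) x⟫ ≤ ‖p - pr x‖ * ‖deriv (deriv pr) x‖ :=
            real_inner_le_norm _ _
        _ ≤ ‖p - pr x‖ * K := by
            exact mul_le_mul_of_nonneg_left (hcurv x hxL) (norm_nonneg _)
        _ < (1 / K) * K := by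
            apply mul_lt_mul_of_pos_right (hbound x hxI) hK
        _ = 1 := by field_simp
    have hb2 : ⟪-(deriv pr x), deriv pr x⟫ = -1 := by
      rw [inner_neg_left, real_inner_self_eq_norm_sq, hunit x hxL]
      norm_num
    rw [hb2]
    linarith
  have := hanti (Set.left_mem_Icc.mpr hlt.le) (Set.right_mem_Icc.mpr hlt.le) hlt
  rw [hgz₁, hgz₂] at this
  exact lt_irrefl 0 this

/-- local uniqueness of the orthogonal projection onto a curve
with curvature bounded by `K`: two nearby local minimizers of the squared
distance, both within distance `1/(2K)` of `p` and within `1/K` of each other,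
coincide. -/
theorem projection_local_uniqueness
    (L K : ℝ) (hL : 0 < L) (hK : 0 < K)
    (pr : ℝ → EuclideanSpace ℝ (Fin 3))
    (hpr : ContDiff ℝ 2 pr)
    (hunit : ∀ s ∈ Set.Icc (0:ℝ) L, ‖deriv pr s‖ = 1)
    (hcurv : ∀ s ∈ Set.Icc (0:ℝ) L, ‖deriv (deriv pr) s‖ ≤ K)
    (p : EuclideanSpace ℝ (Fin 3))
    (hdist : Metric.infDist p (pr '' Set.Icc (0:ℝ) L) < 1 / (2 * K))
    (s₁ s₂ : ℝ)
    (hs₁ : s₁ ∈ Set.Ioo (0:ℝ) L) (hs₂ : s₂ ∈ Set.Ioo (0:ℝ) L)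
    (hmin₁ : IsLocalMin (fun s => ‖p - pr s‖ ^ 2) s₁)
    (hmin₂ : IsLocalMin (fun s => ‖p - pr s‖ ^ 2) s₂)
    (hd₁ : ‖p - pr s₁‖ < 1 / (2 * K))
    (hd₂ : ‖p - pr s₂‖ < 1 / (2 * K))
    (hclose : |s₁ - s₂| < 1 / K) :
    s₁ = s₂ := by
  rcases lt_trichotomy s₁ s₂ with h | h | h
  · refine (proj_aux L K hK pr hpr hunit hcurv p s₁ s₂ hs₁ hs₂
      hmin₁ hmin₂ hd₁ hd₂ h ?_).elim
    rw [abs_sub_comm] at hclose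
    exact lt_of_le_of_lt (le_abs_self _) hclose
  · exact h
  · refine (proj_aux L K hK pr hpr hunit hcurv p s₂ s₁ hs₂ hs₁
      hmin₂ hmin₁ hd₂ hd₁ h ?_).elim
    exact lt_of_le_of_lt (le_abs_self _) hclose
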